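/- Let S : ℕ → Bool be monotone. Define c : ℕ → ℕ → Fin 2 by c x y = par(x) if S z = false for all z < y, and c x y = 1 − par(x) otherwise, where par(x) = x mod 2. Then: (a) c is stable; (b) both sets {x : lim_y c x y = 0} and {x : lim_y c x y = 1} are infinite (so c is a balanced stable coloring); (c) any two elements of an infinite homogeneous set for c have the same parity; and (d) if H is an infinite homogeneous set for c with least two elements x₀ < x₁, then S is identically false if and only if c x₀ x₁ = par(x₀). (This construction witnesses LPO ≤_W SRT²₂ restricted to balanced colorings.) -/

import Mathlib

lemma fin2_sub_ne : ∀ a : Fin 2, 1 - a ≠ a := by decide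

lemma fin2_sub_inj {a b : Fin 2} (h : 1 - a = 1 - b) : a = b := by
  revert h; revert a b; decide

open Fin.NatCast in
lemma fin2_cast_eq_iff {x y : ℕ} : (x : Fin 2) = (y : Fin 2) ↔ x % 2 = y % 2 := by
  constructor
  · intro h
    have := congrArg Fin.val h
    simpa [Fin.val_natCast] using this
  · intro h
    apply Fin.ext
    simpa [Fin.val_natCast] using h

open Fin.NatCast in
lemma fin2_cast_even (n : ℕ) : ((2 * n : ℕ) : Fin 2) = 0 := by
  apply Fin.ext
  simp [Fin.val_natCast, Nat.mul_mod_right]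

open Fin.NatCast in
lemma fin2_cast_odd (n : ℕ) : ((2 * n + 1 : ℕ) : Fin 2) = 1 := by
  apply Fin.ext
  simp only [Fin.val_natCast, Fin.val_one]
  omega

open Fin.NatCast in
/-- The LPO ≤_W balanced-SRT²₂ construction: for monotone S, the coloring
c x y = par x if S is false below y, else 1 − par x, is stable and balanced;
elements of an infinite homogeneous set share parity; and the color of the two
least elements of an infinite homogeneous set determines whether S is
identically false. -/
theorem stmt16 (S : ℕ → Bool) (hS : Monotone S)
    (c : ℕ → ℕ → Fin 2)
    (hc : ∀ x y, c x y =
      if ∀ z < y, S z = false then (x : Fin 2) else 1 - (x : Fin 2)) :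
    (∀ x, ∃ i, ∀ᶠ y in Filter.atTop, c x y = i) ∧
    {x | ∀ᶠ y in Filter.atTop, c x y = 0}.Infinite ∧
    {x | ∀ᶠ y in Filter.atTop, c x y = 1}.Infinite ∧
    (∀ H : Set ℕ, H.Infinite →
      (∃ i, ∀ x ∈ H, ∀ y ∈ H, x < y → c x y = i) →
      ∀ x ∈ H, ∀ y ∈ H, x % 2 = y % 2) ∧
    (∀ H : Set ℕ, H.Infinite →
      (∃ i, ∀ x ∈ H, ∀ y ∈ H, x < y → c x y = i) →
      ∀ x₀ ∈ H, ∀ x₁ ∈ H,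
        (∀ x ∈ H, x₀ ≤ x) → (∀ x ∈ H, x ≠ x₀ → x₁ ≤ x) → x₀ < x₁ →
        ((∀ x, S x = false) ↔ c x₀ x₁ = (x₀ : Fin 2))) := by
  by_cases h : ∀ z, S z = false
  · -- S identically false: c x y = x always
    have hcx : ∀ x y, c x y = (x : Fin 2) := by
      intro x y; rw [hc]; exact if_pos (fun z _ => h z)
    refine ⟨fun x => ⟨(x : Fin 2), Filter.Eventually.of_forall (fun y => hcx x y)⟩,
      ?_, ?_, ?_, ?_⟩
    · apply Set.infinite_of_injective_forall_mem (f := fun n => 2 * n)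
      · intro a b hab; simp only at hab; omega
      · intro n
        simp only [Set.mem_setOf_eq]
        exact Filter.Eventually.of_forall (fun y => by rw [hcx, fin2_cast_even])
    · apply Set.infinite_of_injective_forall_mem (f := fun n => 2 * n + 1)
      · intro a b hab; simp only at hab; omega
      · intro n
        simp only [Set.mem_setOf_eq]
        exact Filter.Eventually.of_forall (fun y => by rw [hcx, fin2_cast_odd])
    · intro H hH ⟨i, hi⟩
      have key : ∀ x ∈ H, ∀ y ∈ H, x < y → x % 2 = y % 2 := by
        intro x hx y hy hxy
        obtain ⟨z, hz, hzgt⟩ := hH.exists_gt y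
        have h1 := hi x hx z hz (hxy.trans hzgt)
        have h2 := hi y hy z hz hzgt
        rw [hcx] at h1 h2
        exact fin2_cast_eq_iff.mp (h1.trans h2.symm)
      intro x hx y hy
      rcases lt_trichotomy x y with hlt | heq | hgt
      · exact key x hx y hy hlt
      · rw [heq]
      · exact (key y hy x hx hgt).symm
    · intro H hH hhom x₀ _ x₁ _ _ _ _
      simp [hcx, h]
  · -- S is eventually true
    push_neg at h
    obtain ⟨n, hn⟩ := h
    have hn' : S n = true := by simpa using hn
    have hcx : ∀ x y, n < y → c x y = 1 - (x : Fin 2) := by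
      intro x y hy; rw [hc]
      exact if_neg (fun hall => hn (hall n hy))
    refine ⟨fun x => ⟨1 - (x : Fin 2), Filter.eventually_atTop.mpr
        ⟨n + 1, fun y hy => hcx x y (by omega)⟩⟩, ?_, ?_, ?_, ?_⟩
    · apply Set.infinite_of_injective_forall_mem (f := fun m => 2 * m + 1)
      · intro a b hab; simp only at hab; omega
      · intro m
        simp only [Set.mem_setOf_eq]
        refine Filter.eventually_atTop.mpr ⟨n + 1, fun y hy => ?_⟩
        rw [hcx _ _ (by omega), fin2_cast_odd]
        decide
    · apply Set.infinite_of_injective_forall_mem (f := fun m => 2 * m)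
      · intro a b hab; simp only at hab; omega
      · intro m
        simp only [Set.mem_setOf_eq]
        refine Filter.eventually_atTop.mpr ⟨n + 1, fun y hy => ?_⟩
        rw [hcx _ _ (by omega), fin2_cast_even]
        decide
    · intro H hH ⟨i, hi⟩
      have key : ∀ x ∈ H, ∀ y ∈ H, x < y → x % 2 = y % 2 := by
        intro x hx y hy hxy
        obtain ⟨z, hz, hzgt⟩ := hH.exists_gt (max y n)
        have hzy : y < z := lt_of_le_of_lt (le_max_left _ _) hzgt
        have hzn : n < z := lt_of_le_of_lt (le_max_right _ _) hzgt
        have h1 := hi x hx z hz (hxy.trans hzy)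
        have h2 := hi y hy z hz hzy
        rw [hcx _ _ hzn] at h1 h2
        exact fin2_cast_eq_iff.mp (fin2_sub_inj (h1.trans h2.symm))
      intro x hx y hy
      rcases lt_trichotomy x y with hlt | heq | hgt
      · exact key x hx y hy hlt
      · rw [heq]
      · exact (key y hy x hx hgt).symm
    · intro H hH ⟨i, hi⟩ x₀ hx₀ x₁ hx₁ _ _ hlt
      constructor
      · intro hall; exact absurd (hall n) hn
      · intro hcol
        exfalso
        obtain ⟨z, hz, hzgt⟩ := hH.exists_gt (max x₁ n)
        have hzx : x₀ < z := lt_of_le_of_lt (hlt.le.trans (le_max_left _ _)) hzgt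
        have hzn : n < z := lt_of_le_of_lt (le_max_right _ _) hzgt
        have h1 := hi x₀ hx₀ z hz hzx
        have h2 := hi x₀ hx₀ x₁ hx₁ hlt
        rw [hcx _ _ hzn] at h1
        rw [hcol] at h2
        exact fin2_sub_ne (x₀ : Fin 2) (h1.trans h2.symm)
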